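/- Let μ be a valuation on K[x], φ a key polynomial for μ, and μ' = [μ; φ, γ] with μ(φ) < γ < ∞. Then for any Λ-valued valuation ρ with μ < ρ < μ', there exists δ ∈ Λ with μ(φ) < δ < γ such that ρ = [μ; φ, δ]. Conversely, every [μ; φ, δ] with μ(φ) < δ < γ satisfies μ < [μ;φ,δ] < μ'. -/

import Mathlib

open Polynomial Finset

variable {K : Type*} [Field K] {Λ : Type*} [AddCommGroup Λ] [LinearOrder Λ] [IsOrderedAddMonoid Λ]

/-- `v` is a valuation on the field `K` with values in `Λ∞ = WithTop Λ`. -/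
def IsVal (v : K → WithTop Λ) : Prop :=
  (∀ a, v a = ⊤ ↔ a = 0) ∧ v 1 = 0 ∧ (∀ a b, v (a * b) = v a + v b) ∧
    (∀ a b, min (v a) (v b) ≤ v (a + b))

/-- `μ` is a valuation on `K[x]` extending `v`. -/
def ExtVal (v : K → WithTop Λ) (μ : Polynomial K → WithTop Λ) : Prop :=
  (∀ f g, μ (f * g) = μ f + μ g) ∧ (∀ f g, min (μ f) (μ g) ≤ μ (f + g)) ∧
    (∀ a, μ (Polynomial.C a) = v a)

/-- `h` divides `g` μ-equivalently (`h ∣_μ g`): there is `q` with `μ(g - q h) > μ(g)`. -/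
def MuDvd (μ : Polynomial K → WithTop Λ) (h g : Polynomial K) : Prop :=
  ∃ q : Polynomial K, μ g < μ (g - q * h)

/-- `φ` is μ-minimal: `φ ∤_μ f` for every nonzero `f` of degree less than `deg φ`. -/
def MuMinimal (μ : Polynomial K → WithTop Λ) (φ : Polynomial K) : Prop :=
  ∀ f : Polynomial K, f ≠ 0 → f.degree < φ.degree → ¬ MuDvd μ φ f

/-- `φ` is μ-irreducible: the principal ideal generated by `in_μ φ` in the graded
algebra is a nonzero prime ideal (stated via μ-divisibility). -/
def MuIrreducible (μ : Polynomial K → WithTop Λ) (φ : Polynomial K) : Prop :=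
  μ φ ≠ ⊤ ∧ ¬ MuDvd μ φ 1 ∧
    ∀ f g : Polynomial K, MuDvd μ φ (f * g) → MuDvd μ φ f ∨ MuDvd μ φ g

/-- A (MacLane–Vaquié) key polynomial for `μ`. -/
def KeyPoly (μ : Polynomial K → WithTop Λ) (φ : Polynomial K) : Prop :=
  φ.Monic ∧ MuMinimal μ φ ∧ MuIrreducible μ φ

/-- `μ'` is the augmented valuation `[μ; φ, γ]`: on φ-expansions
`f = Σ a_s φ^s` (with `deg a_s < deg φ`), `μ' f = min_s (μ(a_s) + s·γ)`. -/
def AugVal (μ : Polynomial K → WithTop Λ) (φ : Polynomial K) (γ : WithTop Λ)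
    (μ' : Polynomial K → WithTop Λ) : Prop :=
  ∀ (f : Polynomial K) (n : ℕ) (a : ℕ → Polynomial K),
    (∀ s, (a s).degree < φ.degree) →
    f = ∑ s ∈ Finset.range n, a s * φ ^ s →
    μ' f = (Finset.range n).inf fun s => μ (a s) + s • γ

section Aux

variable (v : K → WithTop Λ) (μ : Polynomial K → WithTop Λ)

lemma extval_zero (hv : IsVal v) (hμ : ExtVal v μ) : μ 0 = ⊤ := by
  rw [← Polynomial.C_0, hμ.2.2]; exact (hv.1 0).2 rfl

lemma extval_one (hv : IsVal v) (hμ : ExtVal v μ) : μ 1 = 0 := by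
  rw [← Polynomial.C_1, hμ.2.2]; exact hv.2.1

lemma extval_neg (hv : IsVal v) (hμ : ExtVal v μ) (f : Polynomial K) : μ (-f) = μ f := by
  have hm1 : v (-1 : K) = 0 := by
    have h := hv.2.2.1 (-1 : K) (-1)
    rw [neg_mul_neg, one_mul, hv.2.1] at h
    cases hx : v (-1 : K) with
    | top => rw [hx] at h; simp at h
    | coe a =>
      rw [hx, ← WithTop.coe_add] at h
      have haa : a + a = 0 := by exact_mod_cast h.symm
      have ha0 : a = 0 := by
        rcases lt_trichotomy a 0 with h' | h' | h'
        · exact absurd haa.symm (ne_of_gt (add_neg h' h'))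
        · exact h'
        · exact absurd haa.symm (ne_of_lt (add_pos h' h'))
      exact_mod_cast ha0
  have : (-f) = Polynomial.C (-1) * f := by
    simp [map_neg]
  rw [this, hμ.1, hμ.2.2, hm1, zero_add]

lemma val_pow (ρ : Polynomial K → WithTop Λ) (hmul : ∀ f g, ρ (f * g) = ρ f + ρ g)
    (h1 : ρ 1 = 0) (φ : Polynomial K) (s : ℕ) : ρ (φ ^ s) = s • ρ φ := by
  induction s with
  | zero => simp [h1]
  | succ s ih => rw [pow_succ, hmul, ih, succ_nsmul]

/-- valuation of a sum is at least the inf of the valuations. -/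
lemma inf_le_val_sum (hadd : ∀ f g, min (μ f) (μ g) ≤ μ (f + g)) (h0 : μ 0 = ⊤)
    (n : ℕ) (t : ℕ → Polynomial K) :
    (Finset.range n).inf (fun s => μ (t s)) ≤ μ (∑ s ∈ Finset.range n, t s) := by
  induction n with
  | zero => simp [h0]
  | succ n ih =>
    rw [Finset.sum_range_succ, Finset.range_add_one, Finset.inf_insert]
    exact le_trans (le_min (le_trans inf_le_right ih) inf_le_left) (hadd _ _)

lemma val_add_le_left (hadd : ∀ f g, min (μ f) (μ g) ≤ μ (f + g))
    (hneg : ∀ f, μ (-f) = μ f) (x y : Polynomial K) (h : μ x < μ y) :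
    μ (x + y) ≤ μ x := by
  have h2 := hadd (x + y) (-y)
  rw [hneg, add_neg_cancel_right] at h2
  rcases min_le_iff.mp h2 with h3 | h3
  · exact h3
  · exact absurd (lt_of_le_of_lt h3 h) (lt_irrefl _)

lemma val_add_le_of_ne (hadd : ∀ f g, min (μ f) (μ g) ≤ μ (f + g))
    (hneg : ∀ f, μ (-f) = μ f) (x y : Polynomial K) (h : μ x ≠ μ y) :
    μ (x + y) ≤ min (μ x) (μ y) := by
  rcases lt_or_gt_of_ne h with h' | h'
  · rw [min_eq_left h'.le]; exact val_add_le_left μ hadd hneg x y h'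
  · rw [min_eq_right h'.le, add_comm]; exact val_add_le_left μ hadd hneg y x h'

/-- Existence of φ-expansions. -/
lemma expansion_exists (φ : Polynomial K) (hm : φ.Monic) (hd : 0 < φ.degree)
    (f : Polynomial K) :
    ∃ (n : ℕ) (a : ℕ → Polynomial K), (∀ s, (a s).degree < φ.degree) ∧
      f = ∑ s ∈ Finset.range n, a s * φ ^ s := by
  suffices H : ∀ (N : ℕ) (f : Polynomial K), f.natDegree ≤ N →
      ∃ (n : ℕ) (a : ℕ → Polynomial K), (∀ s, (a s).degree < φ.degree) ∧
        f = ∑ s ∈ Finset.range n, a s * φ ^ s from H f.natDegree f le_rfl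
  intro N
  induction N with
  | zero =>
    intro f hf
    refine ⟨1, fun s => if s = 0 then f else 0, fun s => ?_, by simp⟩
    by_cases h : s = 0
    · simp only [h, if_pos rfl]
      calc f.degree ≤ (f.natDegree : WithBot ℕ) := degree_le_natDegree
        _ ≤ (0 : ℕ) := by exact_mod_cast hf
        _ < φ.degree := hd
    · simp only [if_neg h, degree_zero]; exact lt_of_le_of_lt bot_le hd
  | succ N ih =>
    intro f hf
    have hq : (f /ₘ φ).natDegree ≤ N := by
      by_cases h0 : f /ₘ φ = 0
      · simp [h0]
      · have hf0 : f ≠ 0 := by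
          intro h; rw [h, zero_divByMonic] at h0; exact h0 rfl
        have := natDegree_lt_natDegree h0 (degree_divByMonic_lt f φ hf0 hd)
        omega
    obtain ⟨n, b, hb, hbe⟩ := ih (f /ₘ φ) hq
    refine ⟨n + 1, fun s => if s = 0 then f %ₘ φ else b (s - 1), fun s => ?_, ?_⟩
    · by_cases h : s = 0
      · simp only [if_pos h]; exact degree_modByMonic_lt f hm
      · simp only [if_neg h]; exact hb _
    · have hsum : (∑ s ∈ Finset.range (n + 1),
          (if s = 0 then f %ₘ φ else b (s - 1)) * φ ^ s) = f %ₘ φ + φ * (f /ₘ φ) := by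
        rw [Finset.sum_range_succ']
        have h1 : ∀ s, (if s + 1 = 0 then f %ₘ φ else b (s + 1 - 1)) * φ ^ (s + 1)
            = (b s * φ ^ s) * φ := by
          intro s; simp [pow_succ, mul_assoc]
        rw [Finset.sum_congr rfl (fun s _ => h1 s), ← Finset.sum_mul, ← hbe]
        simp only [pow_zero, mul_one, reduceIte]
        rw [mul_comm, add_comm]
      rw [hsum, modByMonic_add_div f φ]

/-- The core upper bound: under suitable hypotheses, `ρ` of a φ-expansion is at most
each term `μ(a_s) + s δ`. -/
lemma rho_expansion_le (hv : IsVal v) (hμ : ExtVal v μ) (φ : Polynomial K)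
    (ρ : Polynomial K → WithTop Λ)
    (hρmul : ∀ f g, ρ (f * g) = ρ f + ρ g)
    (hρadd : ∀ f g, min (ρ f) (ρ g) ≤ ρ (f + g))
    (hρneg : ∀ f, ρ (-f) = ρ f)
    (hρlow : ∀ a : Polynomial K, a.degree < φ.degree → ρ a = μ a)
    (δ : Λ) (hδ : ρ φ = (δ : WithTop Λ))
    (hkey : ∀ a q : Polynomial K, a ≠ 0 → a.degree < φ.degree →
        ¬ μ a < ρ (a + q * φ)) :
    ∀ (n : ℕ) (a : ℕ → Polynomial K), (∀ s, (a s).degree < φ.degree) →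
      ∀ s ∈ Finset.range n,
        ρ (∑ i ∈ Finset.range n, a i * φ ^ i) ≤ μ (a s) + s • (δ : WithTop Λ) := by
  intro n
  induction n with
  | zero => intro a ha s hs; simp at hs
  | succ n ih =>
    intro a ha s hs
    set q : Polynomial K := ∑ i ∈ Finset.range n, a (i + 1) * φ ^ i with hq
    have hsum : (∑ i ∈ Finset.range (n + 1), a i * φ ^ i) = a 0 + q * φ := by
      rw [Finset.sum_range_succ']
      have : ∀ i, a (i + 1) * φ ^ (i + 1) = (a (i + 1) * φ ^ i) * φ := by
        intro i; rw [pow_succ, mul_assoc]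
      rw [Finset.sum_congr rfl (fun i _ => this i), ← Finset.sum_mul, pow_zero, mul_one,
        add_comm]
    have hih : ∀ t ∈ Finset.range n, ρ q ≤ μ (a (t + 1)) + t • (δ : WithTop Λ) :=
      ih (fun i => a (i + 1)) (fun i => ha _)
    have hqφ : ρ (q * φ) = ρ q + (δ : WithTop Λ) := by rw [hρmul, hδ]
    have hρa0 : ρ (a 0) = μ (a 0) := hρlow _ (ha 0)
    -- key: ρ (a 0 + q * φ) ≤ min (μ (a 0)) (ρ q + δ)
    have hmain : ρ (∑ i ∈ Finset.range (n + 1), a i * φ ^ i) ≤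
        min (μ (a 0)) (ρ q + (δ : WithTop Λ)) := by
      rw [hsum]
      by_cases hne : ρ (a 0) = ρ (q * φ)
      · -- equal values
        by_cases htop : μ (a 0) = ⊤
        · rw [htop]
          have : ρ q + (δ : WithTop Λ) = ⊤ := by rw [← hqφ, ← hne, hρa0, htop]
          rw [this]; simp
        · have ha0 : a 0 ≠ 0 := by
            intro h; rw [h] at htop; exact htop (extval_zero v μ hv hμ)
          have := hkey (a 0) q ha0 (ha 0)
          have h1 : ρ (a 0 + q * φ) ≤ μ (a 0) := not_lt.mp this
          refine le_min h1 ?_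
          rw [← hqφ, ← hne, hρa0]; exact h1
      · calc ρ (a 0 + q * φ) ≤ min (ρ (a 0)) (ρ (q * φ)) :=
              val_add_le_of_ne ρ hρadd hρneg _ _ hne
          _ = min (μ (a 0)) (ρ q + (δ : WithTop Λ)) := by rw [hρa0, hqφ]
    -- now conclude for each s
    rcases Nat.eq_zero_or_eq_succ_pred s with hs0 | hs1
    · subst hs0
      simpa using le_trans hmain (min_le_left _ _)
    · obtain ⟨t, rfl⟩ : ∃ t, s = t + 1 := ⟨s - 1, hs1⟩
      have ht : t ∈ Finset.range n := by
        rw [Finset.mem_range] at hs ⊢; omega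
      calc ρ (∑ i ∈ Finset.range (n + 1), a i * φ ^ i)
          ≤ ρ q + (δ : WithTop Λ) := le_trans hmain (min_le_right _ _)
        _ ≤ (μ (a (t + 1)) + t • (δ : WithTop Λ)) + (δ : WithTop Λ) :=
            add_le_add_left (hih t ht) _
        _ = μ (a (t + 1)) + (t + 1) • (δ : WithTop Λ) := by
            rw [add_assoc, succ_nsmul]

/-- The core equality: ρ of a φ-expansion equals the min. -/
lemma rho_expansion_eq (hv : IsVal v) (hμ : ExtVal v μ) (φ : Polynomial K)
    (ρ : Polynomial K → WithTop Λ)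
    (hρmul : ∀ f g, ρ (f * g) = ρ f + ρ g)
    (hρadd : ∀ f g, min (ρ f) (ρ g) ≤ ρ (f + g))
    (hρneg : ∀ f, ρ (-f) = ρ f)
    (hρlow : ∀ a : Polynomial K, a.degree < φ.degree → ρ a = μ a)
    (hρ0 : ρ 0 = ⊤) (hρ1 : ρ 1 = 0)
    (δ : Λ) (hδ : ρ φ = (δ : WithTop Λ))
    (hkey : ∀ a q : Polynomial K, a ≠ 0 → a.degree < φ.degree →
        ¬ μ a < ρ (a + q * φ)) :
    AugVal μ φ (δ : WithTop Λ) ρ := by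
  intro f n a ha hfe
  subst hfe
  refine le_antisymm ?_ ?_
  · exact Finset.le_inf (rho_expansion_le v μ hv hμ φ ρ hρmul hρadd hρneg hρlow δ hδ hkey n a ha)
  · calc (Finset.range n).inf (fun s => μ (a s) + s • (δ : WithTop Λ))
        = (Finset.range n).inf (fun s => ρ (a s * φ ^ s)) := by
          refine Finset.inf_congr rfl (fun s _ => ?_)
          rw [hρmul, hρlow _ (ha s), val_pow ρ hρmul hρ1, hδ]
      _ ≤ _ := inf_le_val_sum ρ hρadd hρ0 n _

end Aux

/-- the valuations strictly between `μ` and `μ' = [μ; φ, γ]`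
(`μ(φ) < γ < ∞`) are exactly the augmentations `[μ; φ, δ]` with `μ(φ) < δ < γ`. -/
theorem interval_of_ordinary_augmentation (v : K → WithTop Λ)
    (μ : Polynomial K → WithTop Λ) (hv : IsVal v) (hμ : ExtVal v μ)
    (φ : Polynomial K) (hφ : KeyPoly μ φ)
    (γ : Λ) (hγ : μ φ < (γ : WithTop Λ))
    (μ' : Polynomial K → WithTop Λ) (haug : AugVal μ φ (γ : WithTop Λ) μ') :
    (∀ ρ : Polynomial K → WithTop Λ, ExtVal v ρ →
        (∀ f, μ f ≤ ρ f) → μ ≠ ρ → (∀ f, ρ f ≤ μ' f) → ρ ≠ μ' →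
        ∃ δ : Λ, μ φ < (δ : WithTop Λ) ∧ δ < γ ∧ AugVal μ φ (δ : WithTop Λ) ρ) ∧
    (∀ δ : Λ, μ φ < (δ : WithTop Λ) → δ < γ →
        ∀ ρ : Polynomial K → WithTop Λ, AugVal μ φ (δ : WithTop Λ) ρ →
        (∀ f, μ f ≤ ρ f) ∧ μ ≠ ρ ∧ (∀ f, ρ f ≤ μ' f) ∧ ρ ≠ μ') := by
  have μ0 : μ 0 = ⊤ := extval_zero v μ hv hμ
  have μ1 : μ 1 = 0 := extval_one v μ hv hμ
  -- φ has positive degree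
  have hdφ : 0 < φ.degree := by
    have hnd : φ.natDegree ≠ 0 := by
      intro h
      have h1 : φ = 1 := hφ.1.natDegree_eq_zero.mp h
      apply hφ.2.2.2.1
      refine ⟨1, ?_⟩
      rw [h1, mul_one, sub_self, μ0, μ1]
      exact lt_top_iff_ne_top.mpr (by simp)
    exact natDegree_pos_iff_degree_pos.mp (Nat.pos_of_ne_zero hnd)
  obtain ⟨δ₀, hδ₀⟩ := WithTop.ne_top_iff_exists.mp hφ.2.2.1
  -- μ itself is the augmentation [μ; φ, μ φ]
  have hkeyμ : ∀ a q : Polynomial K, a ≠ 0 → a.degree < φ.degree →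
      ¬ μ a < μ (a + q * φ) := by
    intro a q ha hd hlt
    exact hφ.2.1 a ha hd ⟨-q, by rwa [neg_mul, sub_neg_eq_add]⟩
  have augμ : AugVal μ φ (δ₀ : WithTop Λ) μ :=
    rho_expansion_eq v μ hv hμ φ μ hμ.1 hμ.2.1 (extval_neg v μ hv hμ)
      (fun a _ => rfl) μ0 μ1 δ₀ hδ₀.symm hkeyμ
  -- evaluation of any AugVal at polys of degree < deg φ and at φ itself
  have hlowexp : ∀ (w : Polynomial K → WithTop Λ) (θ : WithTop Λ), AugVal μ φ θ w →
      ∀ a : Polynomial K, a.degree < φ.degree → w a = μ a := by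
    intro w θ hw a hda
    have := hw a 1 (fun _ => a) (fun _ => hda) (by simp)
    simpa using this
  have hφexp : ∀ (w : Polynomial K → WithTop Λ) (θ : WithTop Λ), AugVal μ φ θ w →
      w φ = θ := by
    intro w θ hw
    have hdeg : ∀ s, ((if s = 1 then 1 else 0 : Polynomial K)).degree < φ.degree := by
      intro s
      by_cases h : s = 1
      · simp only [if_pos h, degree_one]; exact hdφ
      · simp only [if_neg h, degree_zero]; exact lt_of_le_of_lt bot_le hdφ
    have hsum : φ = ∑ s ∈ Finset.range 2,
        (if s = 1 then (1 : Polynomial K) else 0) * φ ^ s := by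
      simp [Finset.sum_range_succ]
    rw [hw φ 2 _ hdeg hsum, show Finset.range 2 = {0, 1} from rfl,
      Finset.inf_insert, Finset.inf_singleton]
    simp [μ0, μ1]
  have μ'φ : μ' φ = (γ : WithTop Λ) := hφexp μ' _ haug
  constructor
  · -- direct part
    intro ρ hρval hμρ hμneρ hρμ' hρneμ'
    have hρφle : ρ φ ≤ (γ : WithTop Λ) := μ'φ ▸ hρμ' φ
    have hρφne : ρ φ ≠ ⊤ := by
      intro h
      rw [h] at hρφle
      exact absurd (top_le_iff.mp hρφle) (by simp)
    obtain ⟨δ, hδ⟩ := WithTop.ne_top_iff_exists.mp hρφne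
    have ρlow : ∀ a : Polynomial K, a.degree < φ.degree → ρ a = μ a := fun a h =>
      le_antisymm ((hlowexp μ' _ haug a h) ▸ hρμ' a) (hμρ a)
    have hkeyρ : ∀ a q : Polynomial K, a ≠ 0 → a.degree < φ.degree →
        ¬ μ a < ρ (a + q * φ) := by
      intro a q ha hd hlt
      obtain ⟨m, b, hb, hbe⟩ := expansion_exists φ hφ.1 hdφ q
      set c : ℕ → Polynomial K := fun s => if s = 0 then a else b (s - 1) with hc
      have hcdeg : ∀ s, (c s).degree < φ.degree := by
        intro s
        by_cases h : s = 0
        · simp only [hc, if_pos h]; exact hd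
        · simp only [hc, if_neg h]; exact hb _
      have hce : a + q * φ = ∑ s ∈ Finset.range (m + 1), c s * φ ^ s := by
        rw [Finset.sum_range_succ']
        have h1 : ∀ s, c (s + 1) * φ ^ (s + 1) = (b s * φ ^ s) * φ := by
          intro s; simp [hc, pow_succ, mul_assoc]
        rw [Finset.sum_congr rfl (fun s _ => h1 s), ← Finset.sum_mul, ← hbe]
        simp only [hc, pow_zero, mul_one, reduceIte]
        rw [add_comm]
      have h1 := hρμ' (a + q * φ)
      rw [haug _ (m + 1) c hcdeg hce] at h1
      have h2 : (Finset.range (m + 1)).inf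
          (fun s => μ (c s) + s • ((γ : WithTop Λ))) ≤ μ a := by
        calc (Finset.range (m + 1)).inf (fun s => μ (c s) + s • ((γ : WithTop Λ)))
            ≤ μ (c 0) + 0 • ((γ : WithTop Λ)) := Finset.inf_le (by simp)
          _ = μ a := by simp [hc]
      exact absurd (lt_of_lt_of_le hlt (le_trans h1 h2)) (lt_irrefl _)
    have ρaug : AugVal μ φ (δ : WithTop Λ) ρ :=
      rho_expansion_eq v μ hv hμ φ ρ hρval.1 hρval.2.1 (extval_neg v ρ hv hρval)
        ρlow (extval_zero v ρ hv hρval) (extval_one v ρ hv hρval) δ hδ.symm hkeyρ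
    have hne1 : μ φ ≠ (δ : WithTop Λ) := by
      intro h
      apply hμneρ
      funext f
      obtain ⟨n, a, ha, hfe⟩ := expansion_exists φ hφ.1 hdφ f
      rw [augμ f n a ha hfe, ρaug f n a ha hfe,
        show ((δ₀ : WithTop Λ)) = (δ : WithTop Λ) from hδ₀.trans h]
    have hne2 : (δ : WithTop Λ) ≠ (γ : WithTop Λ) := by
      intro h
      apply hρneμ'
      funext f
      obtain ⟨n, a, ha, hfe⟩ := expansion_exists φ hφ.1 hdφ f
      rw [ρaug f n a ha hfe, haug f n a ha hfe, h]
    have hlt1 : μ φ < (δ : WithTop Λ) := lt_of_le_of_ne (hδ ▸ hμρ φ) hne1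
    have hlt2 : δ < γ := by
      have : (δ : WithTop Λ) ≤ (γ : WithTop Λ) := hδ ▸ hρφle
      exact_mod_cast lt_of_le_of_ne this hne2
    exact ⟨δ, hlt1, hlt2, ρaug⟩
  · -- converse part
    intro δ hδ1 hδ2 ρ hρ
    have hρφ : ρ φ = (δ : WithTop Λ) := hφexp ρ _ hρ
    refine ⟨?_, ?_, ?_, ?_⟩
    · intro f
      obtain ⟨n, a, ha, hfe⟩ := expansion_exists φ hφ.1 hdφ f
      rw [augμ f n a ha hfe, hρ f n a ha hfe]
      refine Finset.inf_mono_fun (fun s _ => add_le_add_right ?_ _)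
      exact nsmul_le_nsmul_right (hδ₀ ▸ hδ1.le) s
    · intro h
      have h1 : μ φ = ρ φ := congrFun h φ
      rw [hρφ] at h1
      exact absurd (h1 ▸ hδ1) (lt_irrefl _)
    · intro f
      obtain ⟨n, a, ha, hfe⟩ := expansion_exists φ hφ.1 hdφ f
      rw [hρ f n a ha hfe, haug f n a ha hfe]
      refine Finset.inf_mono_fun (fun s _ => add_le_add_right ?_ _)
      exact nsmul_le_nsmul_right (by exact_mod_cast hδ2.le) s
    · intro h
      have h1 : ρ φ = μ' φ := congrFun h φ
      rw [hρφ, μ'φ] at h1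
      have h2 : δ = γ := by exact_mod_cast h1
      exact absurd (h2 ▸ hδ2) (lt_irrefl γ)
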